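/- Let K ≥ 1, fix an index k ∈ Fin K and a real number σ > 0. For p : Fin K → ℂ define I(p) = ∑_{i ≠ k} |p i|² + σ². Then for all p, p̆ : Fin K → ℂ, it holds that 2·Re(conj(p̆ k)·(p k))/I(p̆) − (|p̆ k|/I(p̆))²·I(p) ≤ |p k|²/I(p), and equality holds when p = p̆. -/

import Mathlib

/-- SCA lower bound of the SINR (equation (32) of the paper): with
`I p = ∑_{i ≠ k} |p i|² + σ²`, the SINR `|p k|² / I p` is lower bounded by its
first-order expansion at any reference point `pb`, with equality at `p = pb`. -/
theorem stmt_5 (K : ℕ) (hK : 1 ≤ K) (k : Fin K) (σ : ℝ) (hσ : 0 < σ)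
    (I : (Fin K → ℂ) → ℝ)
    (hI : ∀ p, I p = (∑ i ∈ Finset.univ.erase k, ‖p i‖ ^ 2) + σ ^ 2) :
    ∀ p pb : Fin K → ℂ,
      (2 * ((starRingEnd ℂ) (pb k) * p k).re / I pb
          - (‖pb k‖ / I pb) ^ 2 * I p
        ≤ ‖p k‖ ^ 2 / I p) ∧
      (2 * ((starRingEnd ℂ) (pb k) * pb k).re / I pb
          - (‖pb k‖ / I pb) ^ 2 * I pb
        = ‖pb k‖ ^ 2 / I pb) := by
  have hpos : ∀ p : Fin K → ℂ, 0 < I p := by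
    intro p
    rw [hI p]
    have : 0 ≤ ∑ i ∈ Finset.univ.erase k, ‖p i‖ ^ 2 :=
      Finset.sum_nonneg fun i _ => sq_nonneg _
    nlinarith [sq_nonneg σ]
  intro p pb
  have hIp := hpos p
  have hIb := hpos pb
  constructor
  · have hr : ((starRingEnd ℂ) (pb k) * p k).re ≤ ‖pb k‖ * ‖p k‖ := by
      calc ((starRingEnd ℂ) (pb k) * p k).re ≤ ‖(starRingEnd ℂ) (pb k) * p k‖ :=
            Complex.re_le_norm _
        _ = ‖pb k‖ * ‖p k‖ := by
            rw [norm_mul, Complex.norm_conj]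
    have geq : 2 * ((starRingEnd ℂ) (pb k) * p k).re / I pb
        - (‖pb k‖ / I pb) ^ 2 * I p
        = (2 * ((starRingEnd ℂ) (pb k) * p k).re * I pb * I p
            - ‖pb k‖ ^ 2 * I p ^ 2) / (I pb ^ 2 * I p) := by
      field_simp
    rw [geq, div_le_div_iff₀ (by positivity) hIp]
    nlinarith [sq_nonneg (‖p k‖ * I pb - ‖pb k‖ * I p),
      mul_pos hIp hIb, sq_nonneg (‖pb k‖), sq_nonneg (‖p k‖),
      mul_nonneg (mul_nonneg (mul_nonneg hIp.le hIb.le)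
        (sub_nonneg.2 hr)) hIp.le]
  · have hre : ((starRingEnd ℂ) (pb k) * pb k).re = ‖pb k‖ ^ 2 := by
      rw [mul_comm, Complex.mul_conj, Complex.ofReal_re, Complex.normSq_eq_norm_sq]
    rw [hre]
    field_simp
    ring
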